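/- Let R be an integrally closed integral domain with field of fractions K, let K ⊆ L be a finite Galois extension of fields, and let C be the integral closure of R in L. If R is a D-ring, then C is a D-ring. -/

import Mathlib

open Polynomial

section TrPoly

variable (K : Type*) {L : Type*} [Field K] [Field L] [Algebra K L] [FiniteDimensional K L]

noncomputable def trPoly (c : L) (p : Polynomial L) : Polynomial K :=
  ∑ n ∈ p.support, Polynomial.C (Algebra.trace K L (c * p.coeff n)) * Polynomial.X ^ n

omit [FiniteDimensional K L] in
lemma trPoly_coeff (c : L) (p : Polynomial L) (m : ℕ) :
    (trPoly K c p).coeff m = Algebra.trace K L (c * p.coeff m) := by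
  rw [trPoly, Polynomial.finset_sum_coeff]
  simp only [Polynomial.coeff_C_mul, Polynomial.coeff_X_pow, mul_ite, mul_one, mul_zero]
  rw [Finset.sum_ite_eq p.support m (fun n => Algebra.trace K L (c * p.coeff n))]
  by_cases h : m ∈ p.support
  · rw [if_pos h]
  · rw [if_neg h, Polynomial.notMem_support_iff.mp h, mul_zero, map_zero]

omit [FiniteDimensional K L] in
lemma trPoly_eval (c : L) (p : Polynomial L) (k : K) :
    (trPoly K c p).eval k = Algebra.trace K L (c * p.eval (algebraMap K L k)) := by
  rw [trPoly, Polynomial.eval_finset_sum]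
  conv_rhs => rw [Polynomial.eval_eq_sum, Polynomial.sum_def]
  rw [Finset.mul_sum, map_sum]
  refine Finset.sum_congr rfl fun n _ => ?_
  rw [Polynomial.eval_mul, Polynomial.eval_C, Polynomial.eval_pow, Polynomial.eval_X]
  have h1 : c * (p.coeff n * algebraMap K L k ^ n) = (k ^ n) • (c * p.coeff n) := by
    rw [Algebra.smul_def, map_pow]; ring
  rw [h1, map_smul, smul_eq_mul, mul_comm]

lemma trPoly_expansion [Algebra.IsSeparable K L] {ι : Type*} [Fintype ι] [DecidableEq ι]
    (b : Module.Basis ι K L) (p : Polynomial L) :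
    p = ∑ i, (trPoly K (b i) p).map (algebraMap K L) *
      Polynomial.C ((Algebra.traceForm K L).dualBasis
        (traceForm_nondegenerate K L) b i) := by
  set bb := (Algebra.traceForm K L).dualBasis (traceForm_nondegenerate K L) b with hbb
  ext m
  rw [Polynomial.finset_sum_coeff]
  have h : ∀ i, ((trPoly K (b i) p).map (algebraMap K L) * Polynomial.C (bb i)).coeff m
      = (bb.repr (p.coeff m) i) • bb i := by
    intro i
    rw [Polynomial.coeff_mul_C, Polynomial.coeff_map, trPoly_coeff, hbb,
      LinearMap.BilinForm.dualBasis_repr_apply, Algebra.traceForm_apply, Algebra.smul_def,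
      mul_comm (p.coeff m) (b i)]
  rw [Finset.sum_congr rfl fun i _ => h i, Module.Basis.sum_repr]

end TrPoly

lemma fixed_mem_range {K L : Type*} [Field K] [Field L] [Algebra K L] [FiniteDimensional K L]
    [IsGalois K L] {x : L} (hx : ∀ σ : L ≃ₐ[K] L, σ x = x) :
    ∃ y : K, algebraMap K L y = x := by
  have htfae := IsGalois.tfae (F := K) (E := L)
  have hbot' := List.TFAE.out htfae 0 1
  have hbot : IntermediateField.fixedField (⊤ : Subgroup (L ≃ₐ[K] L)) = ⊥ :=
    hbot'.mp inferInstance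
  have hmem : x ∈ IntermediateField.fixedField (⊤ : Subgroup (L ≃ₐ[K] L)) := fun σ => hx σ
  rw [hbot, IntermediateField.mem_bot] at hmem
  exact hmem

/-- An integral domain `R` is a *D-ring* if for all polynomials `f, g ∈ R[x]` such that
`g(k) ∣ f(k)` in `R` for all but finitely many `k ∈ R`, there is a polynomial `q` over the
field of fractions of `R` with `f = q * g` in `K[x]`. -/
def IsDRing (R : Type*) [CommRing R] [IsDomain R] : Prop :=
  ∀ f g : Polynomial R,
    (∀ᶠ k in Filter.cofinite, g.eval k ∣ f.eval k) →
    ∃ q : Polynomial (FractionRing R),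
      f.map (algebraMap R (FractionRing R)) = q * g.map (algebraMap R (FractionRing R))

theorem main_dvd
    (R : Type*) [CommRing R] [IsDomain R] [IsIntegrallyClosed R]
    (K : Type*) [Field K] [Algebra R K] [IsFractionRing R K]
    (L : Type*) [Field L] [Algebra K L] [Algebra R L] [IsScalarTower R K L]
    [FiniteDimensional K L] [IsGalois K L]
    (hR : IsDRing R)
    (f g : Polynomial (integralClosure R L))
    (hfg : ∀ᶠ k in Filter.cofinite, g.eval k ∣ f.eval k)
    (hg : g ≠ 0) :
    g.map (algebraMap (integralClosure R L) L) ∣ f.map (algebraMap (integralClosure R L) L) := by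
  classical
  -- injectivity facts
  have hKLinj : Function.Injective (algebraMap K L) := (algebraMap K L).injective
  have hRKinj : Function.Injective (algebraMap R K) := IsFractionRing.injective R K
  have hRLinj : Function.Injective (algebraMap R L) := by
    rw [IsScalarTower.algebraMap_eq R K L]; exact hKLinj.comp hRKinj
  have hCLinj : Function.Injective (algebraMap ↥(integralClosure R L) L) := fun a b hab => Subtype.ext hab
  have hRCinj : Function.Injective (algebraMap R ↥(integralClosure R L)) := fun a b hab => by
    apply hRLinj
    rw [IsScalarTower.algebraMap_apply R ↥(integralClosure R L) L, hab, ← IsScalarTower.algebraMap_apply]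
  have hrange : ∀ x : L, x ∈ Set.range (algebraMap ↥(integralClosure R L) L) ↔ IsIntegral R x := by
    intro x
    constructor
    · rintro ⟨c, rfl⟩; exact c.2
    · intro hx; exact ⟨⟨x, hx⟩, rfl⟩
  have hσint : ∀ (σ : L ≃ₐ[K] L) (x : L), IsIntegral R x → IsIntegral R (σ x) := by
    intro σ x hx
    exact hx.map (AlgEquiv.restrictScalars R σ).toAlgHom
  set gL := g.map (algebraMap ↥(integralClosure R L) L) with hgLdef
  set fL := f.map (algebraMap ↥(integralClosure R L) L) with hfLdef
  have hgL0 : gL ≠ 0 := (Polynomial.map_ne_zero_iff hCLinj).mpr hg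
  let sh : (L ≃ₐ[K] L) → (L →+* L) := fun σ => σ.toAlgHom.toRingHom
  have hshinj : ∀ σ : L ≃ₐ[K] L, Function.Injective (sh σ) := fun σ => σ.injective
  set P : Polynomial L := ∏ σ ∈ (Finset.univ.erase (1 : L ≃ₐ[K] L)), gL.map (sh σ) with hPdef
  set N : Polynomial L := ∏ σ : L ≃ₐ[K] L, gL.map (sh σ) with hNdef
  have hone : gL.map (sh 1) = gL := by
    have h1 : sh 1 = RingHom.id L := RingHom.ext fun x => rfl
    rw [h1, Polynomial.map_id]
  have hNP : N = gL * P := by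
    rw [hNdef, hPdef, ← Finset.mul_prod_erase Finset.univ _ (Finset.mem_univ (1 : L ≃ₐ[K] L)),
      hone]
  have hP0 : P ≠ 0 := by
    rw [hPdef]
    rw [Finset.prod_ne_zero_iff]
    exact fun σ _ => (Polynomial.map_ne_zero_iff (hshinj σ)).mpr hgL0
  -- membership in lifts
  have hcoeff_int : ∀ (p : Polynomial ↥(integralClosure R L)) (n : ℕ),
      IsIntegral R ((p.map (algebraMap ↥(integralClosure R L) L)).coeff n) := by
    intro p n
    rw [Polynomial.coeff_map]
    exact (hrange _).mp ⟨p.coeff n, rfl⟩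
  have hmemC : ∀ σ : L ≃ₐ[K] L, gL.map (sh σ) ∈ Polynomial.lifts (algebraMap ↥(integralClosure R L) L) := by
    intro σ
    rw [Polynomial.lifts_iff_coeff_lifts]
    intro n
    rw [hrange, Polynomial.coeff_map]
    exact hσint σ _ (hcoeff_int g n)
  have hNmem : N ∈ Polynomial.lifts (algebraMap ↥(integralClosure R L) L) := prod_mem fun σ _ => hmemC σ
  have hhmem : fL * P ∈ Polynomial.lifts (algebraMap ↥(integralClosure R L) L) := by
    refine mul_mem ?_ (prod_mem fun σ _ => hmemC σ)
    rw [Polynomial.mem_lifts]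
    exact ⟨f, rfl⟩
  have hint : ∀ p ∈ Polynomial.lifts (algebraMap ↥(integralClosure R L) L), ∀ n : ℕ, IsIntegral R (p.coeff n) :=
    fun p hp n => (hrange _).mp ((Polynomial.lifts_iff_coeff_lifts p).mp hp n)
  -- N is Galois-fixed
  have hNfix : ∀ τ : L ≃ₐ[K] L, N.map (sh τ) = N := by
    intro τ
    have h1 : N.map (sh τ) = ∏ σ : L ≃ₐ[K] L, (gL.map (sh σ)).map (sh τ) := by
      rw [hNdef, ← Polynomial.coe_mapRingHom, map_prod]
    have h2 : ∀ σ : L ≃ₐ[K] L, (gL.map (sh σ)).map (sh τ) = gL.map (sh (τ * σ)) := by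
      intro σ
      rw [Polynomial.map_map]
      congr 1
    calc N.map (sh τ) = ∏ σ : L ≃ₐ[K] L, gL.map (sh (τ * σ)) := by
          rw [h1]; exact Finset.prod_congr rfl fun σ _ => h2 σ
      _ = N := Fintype.prod_equiv (Equiv.mulLeft τ) _ _ (fun σ => rfl)
  -- N comes from R
  have hNR' : ∃ NR : Polynomial R, NR.map (algebraMap R L) = N := by
    rw [← Polynomial.mem_lifts, Polynomial.lifts_iff_coeff_lifts]
    intro n
    obtain ⟨y, hy⟩ := fixed_mem_range (x := N.coeff n) (fun τ => by
      have h3 : (N.map (sh τ)).coeff n = τ (N.coeff n) := Polynomial.coeff_map _ _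
      rw [hNfix τ] at h3
      exact h3.symm)
    have hyint : IsIntegral R y :=
      (isIntegral_algebraMap_iff hKLinj).mp (hy ▸ hint N hNmem n)
    obtain ⟨r, hr⟩ := IsIntegrallyClosed.isIntegral_iff.mp hyint
    exact ⟨r, by rw [IsScalarTower.algebraMap_apply R K L, hr, hy]⟩
  obtain ⟨NR, hNR⟩ := hNR'
  -- basis and denominators
  let b0 := Module.finBasis K L
  obtain ⟨d, hd0, hdint⟩ := exists_integral_multiples R K (Finset.univ.image b0)
  have hc_i : ∀ i, IsIntegral R (algebraMap R L d * b0 i) := by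
    intro i
    rw [← Algebra.smul_def]
    exact hdint _ (Finset.mem_image_of_mem b0 (Finset.mem_univ i))
  set bb := (Algebra.traceForm K L).dualBasis (traceForm_nondegenerate K L) b0 with hbbdef
  set hi : Fin (Module.finrank K L) → Polynomial K :=
    fun i => trPoly K (algebraMap R L d * b0 i) (fL * P) with hidef
  have hiR : ∀ i, ∃ Hi : Polynomial R, Hi.map (algebraMap R K) = hi i := by
    intro i
    rw [← Polynomial.mem_lifts, Polynomial.lifts_iff_coeff_lifts]
    intro m
    rw [hidef]
    rw [trPoly_coeff]
    have hti : IsIntegral R (Algebra.trace K L ((algebraMap R L d * b0 i) * (fL * P).coeff m)) :=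
      Algebra.isIntegral_trace ((hc_i i).mul (hint _ hhmem m))
    exact IsIntegrallyClosed.isIntegral_iff.mp hti
  choose HiR hHiR using hiR
  -- eventual divisibility over R
  have hfgR : ∀ᶠ k in (Filter.cofinite : Filter R),
      g.eval (algebraMap R ↥(integralClosure R L) k) ∣ f.eval (algebraMap R ↥(integralClosure R L) k) :=
    hRCinj.tendsto_cofinite.eventually hfg
  have hdvdR : ∀ i, ∀ᶠ k in (Filter.cofinite : Filter R), NR.eval k ∣ (HiR i).eval k := by
    intro i
    refine hfgR.mono fun k hk => ?_
    obtain ⟨c, hc⟩ := hk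
    set x0 := algebraMap R L k with hx0
    have hCeval : ∀ p : Polynomial ↥(integralClosure R L),
        (p.map (algebraMap ↥(integralClosure R L) L)).eval x0 = algebraMap ↥(integralClosure R L) L (p.eval (algebraMap R ↥(integralClosure R L) k)) := by
      intro p
      rw [hx0, IsScalarTower.algebraMap_apply R ↥(integralClosure R L) L, Polynomial.eval_map,
        Polynomial.eval₂_at_apply]
    have hfLx : fL.eval x0 = gL.eval x0 * algebraMap ↥(integralClosure R L) L c := by
      rw [hfLdef, hCeval f, hc, map_mul, hgLdef, hCeval g]
    have hNx : N.eval x0 = algebraMap R L (NR.eval k) := by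
      rw [← hNR, hx0, Polynomial.eval_map, Polynomial.eval₂_at_apply]
    have hhx : (fL * P).eval x0 = N.eval x0 * algebraMap ↥(integralClosure R L) L c := by
      rw [Polynomial.eval_mul, hfLx, hNP, Polynomial.eval_mul]; ring
    have htr : algebraMap R K ((HiR i).eval k) = algebraMap R K (NR.eval k) *
        Algebra.trace K L ((algebraMap R L d * b0 i) * algebraMap ↥(integralClosure R L) L c) := by
      have e1 : algebraMap R K ((HiR i).eval k) = (hi i).eval (algebraMap R K k) := by
        rw [← hHiR i, Polynomial.eval_map, Polynomial.eval₂_at_apply]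
      rw [e1, hidef]
      rw [trPoly_eval, ← IsScalarTower.algebraMap_apply R K L, ← hx0, hhx, hNx,
        IsScalarTower.algebraMap_apply R K L (NR.eval k)]
      have e2 : (algebraMap R L d * b0 i) *
          (algebraMap K L (algebraMap R K (NR.eval k)) * algebraMap ↥(integralClosure R L) L c) =
          (algebraMap R K (NR.eval k)) • ((algebraMap R L d * b0 i) * algebraMap ↥(integralClosure R L) L c) := by
        rw [Algebra.smul_def]; ring
      rw [e2, LinearMap.map_smul, smul_eq_mul]
    obtain ⟨r, hr⟩ := IsIntegrallyClosed.isIntegral_iff.mp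
      (Algebra.isIntegral_trace (R := R) (L := K) (F := L) ((hc_i i).mul ((hrange _).mp ⟨c, rfl⟩)))
    refine ⟨r, hRKinj ?_⟩
    rw [htr, map_mul (algebraMap R K) (NR.eval k) r, hr]
  -- apply the D-ring property of R
  choose qF hqF using fun i => hR (HiR i) NR (hdvdR i)
  let eR : FractionRing R ≃ₐ[R] K := FractionRing.algEquiv R K
  let ψ : FractionRing R →+* L := (algebraMap K L).comp (eR : FractionRing R →+* K)
  have hψ : ψ.comp (algebraMap R (FractionRing R)) = algebraMap R L := by
    refine RingHom.ext fun r => ?_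
    have : eR (algebraMap R (FractionRing R) r) = algebraMap R K r := eR.commutes r
    simp only [ψ, RingHom.comp_apply]
    rw [RingHom.coe_coe, this, ← IsScalarTower.algebraMap_apply]
  have hqL : ∀ i, (hi i).map (algebraMap K L) = (qF i).map ψ * N := by
    intro i
    have h4 := congrArg (Polynomial.map ψ) (hqF i)
    rw [Polynomial.map_mul, Polynomial.map_map, Polynomial.map_map, hψ, hNR] at h4
    rw [← hHiR i, Polynomial.map_map, ← IsScalarTower.algebraMap_eq R K L]
    exact h4
  -- expansion
  have hhi : ∀ i, hi i = Polynomial.C (algebraMap R K d) * trPoly K (b0 i) (fL * P) := by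
    intro i
    ext m
    rw [hidef, Polynomial.coeff_C_mul, trPoly_coeff, trPoly_coeff]
    have e3 : (algebraMap R L d * b0 i) * (fL * P).coeff m =
        (algebraMap R K d) • (b0 i * (fL * P).coeff m) := by
      rw [Algebra.smul_def, ← IsScalarTower.algebraMap_apply]; ring
    rw [e3, LinearMap.map_smul, smul_eq_mul]
  have hexp := trPoly_expansion K b0 (fL * P)
  have hdK : Polynomial.C (algebraMap R L d) * (fL * P) =
      ∑ i, (hi i).map (algebraMap K L) * Polynomial.C (bb i) := by
    calc Polynomial.C (algebraMap R L d) * (fL * P)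
        = ∑ i, Polynomial.C (algebraMap R L d) *
            ((trPoly K (b0 i) (fL * P)).map (algebraMap K L) * Polynomial.C (bb i)) := by
          conv_lhs => rw [hexp]
          rw [Finset.mul_sum]
      _ = ∑ i, (hi i).map (algebraMap K L) * Polynomial.C (bb i) := by
          refine Finset.sum_congr rfl fun i _ => ?_
          rw [hhi i, Polynomial.map_mul, Polynomial.map_C,
            ← IsScalarTower.algebraMap_apply R K L]
          ring
  have hdL0 : algebraMap R L d ≠ 0 := fun h0 => hd0 (hRLinj (by rw [h0, map_zero]))
  have hNdvd : N ∣ fL * P := by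
    refine ⟨Polynomial.C (algebraMap R L d)⁻¹ * ∑ i, (qF i).map ψ * Polynomial.C (bb i), ?_⟩
    have h2 : Polynomial.C (algebraMap R L d) * (fL * P) =
        N * ∑ i, (qF i).map ψ * Polynomial.C (bb i) := by
      rw [hdK, Finset.mul_sum]
      refine Finset.sum_congr rfl fun i _ => ?_
      rw [hqL i]; ring
    have h3 := congrArg (fun p => Polynomial.C (algebraMap R L d)⁻¹ * p) h2
    beta_reduce at h3
    rw [← mul_assoc, ← Polynomial.C_mul, inv_mul_cancel₀ hdL0, Polynomial.C_1, one_mul] at h3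
    rw [h3]; ring
  have hfinal : gL * P ∣ fL * P := hNP ▸ hNdvd
  exact (mul_dvd_mul_iff_right hP0).mp hfinal

theorem integralClosure_isDRing
    (R : Type*) [CommRing R] [IsDomain R] [IsIntegrallyClosed R]
    (K : Type*) [Field K] [Algebra R K] [IsFractionRing R K]
    (L : Type*) [Field L] [Algebra K L] [Algebra R L] [IsScalarTower R K L]
    [FiniteDimensional K L] [IsGalois K L]
    (hR : IsDRing R) : IsDRing (integralClosure R L) := by
  classical
  intro f g hfg
  have hRinf : Infinite R := by
    by_contra hfin
    rw [not_infinite_iff_finite] at hfin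
    obtain ⟨q, hq⟩ := hR 1 0 (by rw [Filter.cofinite_eq_bot]; simp)
    rw [Polynomial.map_one, Polynomial.map_zero, mul_zero] at hq
    exact one_ne_zero hq
  have hKLinj : Function.Injective (algebraMap K L) := (algebraMap K L).injective
  have hRKinj : Function.Injective (algebraMap R K) := IsFractionRing.injective R K
  have hRLinj : Function.Injective (algebraMap R L) := by
    rw [IsScalarTower.algebraMap_eq R K L]; exact hKLinj.comp hRKinj
  have hCLinj : Function.Injective (algebraMap ↥(integralClosure R L) L) :=
    fun a b hab => Subtype.ext hab
  have hRCinj : Function.Injective (algebraMap R ↥(integralClosure R L)) := fun a b hab => by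
    apply hRLinj
    rw [IsScalarTower.algebraMap_apply R ↥(integralClosure R L) L, hab,
      ← IsScalarTower.algebraMap_apply]
  haveI : IsFractionRing ↥(integralClosure R L) L :=
    integralClosure.isFractionRing_of_finite_extension K L
  suffices hdvd : ∃ q' : Polynomial L,
      f.map (algebraMap ↥(integralClosure R L) L) =
        q' * g.map (algebraMap ↥(integralClosure R L) L) by
    obtain ⟨q', hq'⟩ := hdvd
    let e : L ≃ₐ[↥(integralClosure R L)] FractionRing ↥(integralClosure R L) :=
      (FractionRing.algEquiv ↥(integralClosure R L) L).symm
    have hcomp : (e : L →+* FractionRing ↥(integralClosure R L)).comp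
        (algebraMap ↥(integralClosure R L) L)
        = algebraMap ↥(integralClosure R L) (FractionRing ↥(integralClosure R L)) :=
      RingHom.ext fun c => e.commutes c
    refine ⟨q'.map (e : L →+* FractionRing ↥(integralClosure R L)), ?_⟩
    calc f.map (algebraMap ↥(integralClosure R L) (FractionRing ↥(integralClosure R L)))
        = (f.map (algebraMap ↥(integralClosure R L) L)).map
            (e : L →+* FractionRing ↥(integralClosure R L)) := by
          rw [Polynomial.map_map, hcomp]
      _ = (q' * g.map (algebraMap ↥(integralClosure R L) L)).map
            (e : L →+* FractionRing ↥(integralClosure R L)) := by rw [hq']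
      _ = q'.map (e : L →+* FractionRing ↥(integralClosure R L)) *
            g.map (algebraMap ↥(integralClosure R L) (FractionRing ↥(integralClosure R L))) := by
          rw [Polynomial.map_mul, Polynomial.map_map, hcomp]
  by_cases hg : g = 0
  · subst hg
    haveI hCinf : Infinite ↥(integralClosure R L) :=
      Infinite.of_injective (algebraMap R ↥(integralClosure R L)) hRCinj
    have hf0 : f = 0 := by
      by_contra hf
      have h1 : {k : ↥(integralClosure R L) | f.IsRoot k}.Finite :=
        Polynomial.finite_setOf_isRoot hf
      have hfg' : ∀ᶠ k in (Filter.cofinite :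
          Filter ↥(integralClosure R L)), f.eval k = 0 :=
        hfg.mono fun k hk => by simpa [zero_dvd_iff] using hk
      have h2 : {k : ↥(integralClosure R L) | ¬ f.eval k = 0}.Finite :=
        Filter.eventually_cofinite.mp hfg'
      have hu : (Set.univ : Set ↥(integralClosure R L)).Finite := by
        have hcover : {k : ↥(integralClosure R L) | f.IsRoot k} ∪
            {k : ↥(integralClosure R L) | ¬ f.eval k = 0} = Set.univ := by
          ext x
          by_cases hx : f.eval x = 0 <;> simp [Polynomial.IsRoot, hx]
        rw [← hcover]
        exact h1.union h2
      haveI := Set.finite_univ_iff.mp hu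
      exact not_finite ↥(integralClosure R L)
    subst hf0
    exact ⟨0, by simp⟩
  · obtain ⟨q', hq'⟩ := main_dvd R K L hR f g hfg hg
    exact ⟨q', by rw [hq', mul_comm]⟩
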